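/- Let n ≥ 3 and m ≥ 2. The Laplacian eigenvalues of the Kronecker product K_{n−1} × K_m are exactly 0, (m−1)(n−2)−1, n+(m−1)(n−2)−2, and (n−1)(m−1). Consequently, the algebraic connectivity of K_{n−1} × K_m equals (n−2)(m−1)−1. -/

import Mathlib

open scoped Classical

noncomputable section

namespace ArxivPaper

/-- The Kronecker (tensor) product of two simple graphs. -/
def tensorProd {α β : Type*} (G : SimpleGraph α) (H : SimpleGraph β) : SimpleGraph (α × β) where
  Adj p q := G.Adj p.1 q.1 ∧ H.Adj p.2 q.2
  symm := ⟨fun p q h => ⟨G.adj_symm h.1, H.adj_symm h.2⟩⟩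
  loopless := ⟨fun p h => G.irrefl h.1⟩

/-- The multiset of eigenvalues of a real matrix (roots of its characteristic polynomial,
with algebraic multiplicity). -/
def spec {n : Type*} [Fintype n] [DecidableEq n] (M : Matrix n n ℝ) : Multiset ℝ :=
  M.charpoly.roots

/-- Eigenvalues sorted in nondecreasing order. -/
def sortedSpec {n : Type*} [Fintype n] [DecidableEq n] (M : Matrix n n ℝ) : List ℝ :=
  (spec M).sort (· ≤ ·)

/-- The smallest eigenvalue of a real matrix. -/
def minEig {n : Type*} [Fintype n] [DecidableEq n] (M : Matrix n n ℝ) : ℝ :=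
  (sortedSpec M).getD 0 0

/-- The Laplacian spectrum of a finite simple graph. -/
def lapSpec {V : Type*} [Fintype V] (G : SimpleGraph V) : Multiset ℝ :=
  spec (G.lapMatrix ℝ)

/-- Algebraic connectivity: the second smallest Laplacian eigenvalue. -/
def algConn {V : Type*} [Fintype V] (G : SimpleGraph V) : ℝ :=
  (sortedSpec (G.lapMatrix ℝ)).getD 1 0

/-- `Q_{m-1}(G) = A(G) + (m-1)·D(G)` as a real matrix. -/
def qMatrix {V : Type*} [Fintype V] (G : SimpleGraph V) (m : ℕ) : Matrix V V ℝ :=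
  G.adjMatrix ℝ + ((m : ℝ) - 1) • G.degMatrix ℝ

/-- `q_min^{m-1}(G)`: the smallest eigenvalue of `Q_{m-1}(G)`. -/
def qMin {V : Type*} [Fintype V] (G : SimpleGraph V) (m : ℕ) : ℝ :=
  minEig (qMatrix G m)

/-- `β_m(X) = L(X) × K_m`. -/
def betaM {V : Type*} (G : SimpleGraph V) (m : ℕ) : SimpleGraph (G.edgeSet × Fin m) :=
  tensorProd G.lineGraph (⊤ : SimpleGraph (Fin m))

/-- The star graph `K_{1,n-1}` on `n` vertices, with center `0`. -/
def starGraph (n : ℕ) : SimpleGraph (Fin n) :=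
  SimpleGraph.fromRel fun u _ => (u : ℕ) = 0

/-- The tree `T(k,s,t)`: a path on `k+1` vertices with `s` pendant vertices attached to the
first vertex and `t` pendant vertices attached to the last vertex. -/
def treeT (k s t : ℕ) : SimpleGraph (Fin (k+1) ⊕ (Fin s ⊕ Fin t)) :=
  SimpleGraph.fromRel fun u v => match u, v with
    | .inl i, .inl j => (i : ℕ) + 1 = (j : ℕ)
    | .inr (.inl _), .inl i => (i : ℕ) = 0
    | .inr (.inr _), .inl i => (i : ℕ) = k
    | _, _ => False


section Spectrum

open Matrix Polynomial
open scoped Kronecker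

variable {a : ℕ}

/-- All-ones matrix. -/
def Jm (a : ℕ) : Matrix (Fin a) (Fin a) ℝ := Matrix.of fun _ _ => 1
/-- Matrix whose row `z` is all ones. -/
def Fm (z : Fin a) : Matrix (Fin a) (Fin a) ℝ := Matrix.of fun i _ => if i = z then 1 else 0
/-- Matrix whose column `z` is all ones. -/
def Gm (z : Fin a) : Matrix (Fin a) (Fin a) ℝ := Matrix.of fun _ j => if j = z then 1 else 0
/-- Single-entry matrix at `(z,z)`. -/
def Em (z : Fin a) : Matrix (Fin a) (Fin a) ℝ := Matrix.of fun i j => if i = z ∧ j = z then 1 else 0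
/-- Eigenvector matrix for `J - 1`. -/
def Pm (z : Fin a) : Matrix (Fin a) (Fin a) ℝ := 1 + Gm z - Fm z
/-- `a` times the inverse of `Pm`. -/
def Rm (z : Fin a) : Matrix (Fin a) (Fin a) ℝ := (a:ℝ) • 1 - (a:ℝ) • Em z + (2:ℝ) • Fm z - Jm a
/-- Diagonal eigenvalue matrix for `J - 1`. -/
def Dm (a : ℕ) (z : Fin a) : Matrix (Fin a) (Fin a) ℝ := (a:ℝ) • Em z - 1

lemma Jm_mul_Gm (z : Fin a) : Jm a * Gm z = (a:ℝ) • Gm z := by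
  ext i k; simp [Jm, Gm, Matrix.mul_apply]

lemma Jm_mul_Fm (z : Fin a) : Jm a * Fm z = Jm a := by
  ext i k; simp [Jm, Fm, Matrix.mul_apply]

lemma Gm_mul_Fm (z : Fin a) : Gm z * Fm z = Jm a := by
  ext i k; simp [Jm, Fm, Gm, Matrix.mul_apply]

lemma Gm_mul_Jm (z : Fin a) : Gm z * Jm a = Jm a := by
  ext i k; simp [Jm, Gm, Matrix.mul_apply]

lemma Gm_mul_Em (z : Fin a) : Gm z * Em z = Gm z := by
  ext i k
  simp [Gm, Em, Matrix.mul_apply, ite_and]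

lemma Fm_mul_Em (z : Fin a) : Fm z * Em z = Em z := by
  ext i k
  simp [Fm, Em, Matrix.mul_apply, ite_and]
  split_ifs <;> rfl

lemma Fm_mul_Fm (z : Fin a) : Fm z * Fm z = Fm z := by
  ext i k; simp [Fm, Matrix.mul_apply]

lemma Fm_mul_Jm (z : Fin a) : Fm z * Jm a = (a:ℝ) • Fm z := by
  ext i k; simp [Fm, Jm, Matrix.mul_apply]

lemma key1 (z : Fin a) : (Jm a - 1) * Pm z = Pm z * Dm a z := by
  unfold Pm Dm
  simp only [sub_mul, add_mul, mul_sub, mul_add, one_mul, mul_one, mul_smul_comm,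
    Jm_mul_Gm, Jm_mul_Fm, Gm_mul_Em, Fm_mul_Em]
  module

lemma key2 (z : Fin a) : Pm z * Rm z = (a:ℝ) • 1 := by
  unfold Pm Rm
  simp only [sub_mul, add_mul, mul_sub, mul_add, one_mul, mul_one, mul_smul_comm,
    Jm_mul_Gm, Jm_mul_Fm, Gm_mul_Em, Fm_mul_Em, Gm_mul_Fm, Gm_mul_Jm, Fm_mul_Fm, Fm_mul_Jm]
  module

lemma detPm_ne_zero (ha : 1 ≤ a) (z : Fin a) : (Pm z).det ≠ 0 := by
  intro h
  have h2 := congrArg Matrix.det (key2 z)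
  rw [Matrix.det_mul, h, zero_mul, Matrix.det_smul, Matrix.det_one, mul_one] at h2
  have : ((a:ℝ)) ^ Fintype.card (Fin a) ≠ 0 := by
    apply pow_ne_zero
    simp only [ne_eq, Nat.cast_eq_zero]
    omega
  exact this h2.symm

lemma Dm_eq_diagonal (z : Fin a) :
    Dm a z = Matrix.diagonal (fun i => if i = z then (a:ℝ) - 1 else -1) := by
  ext i j
  by_cases h : i = j
  · subst h; simp [Dm, Em, Matrix.diagonal_apply, Matrix.one_apply]
    split_ifs <;> ring
  · simp [Dm, Em, Matrix.diagonal_apply, Matrix.one_apply, h]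
    intro h1 h2; exact absurd (h1.trans h2.symm) h

lemma eval_charpoly' {N : Type*} [Fintype N] [DecidableEq N] (M : Matrix N N ℝ) (r : ℝ) :
    M.charpoly.eval r = (r • (1 : Matrix N N ℝ) - M).det := by
  rw [Matrix.charpoly, _root_.eval_det, Matrix.matPolyEquiv_charmatrix]
  congr 1
  rw [eval_sub, eval_X, eval_C]
  congr 1
  simp [Matrix.scalar, Matrix.smul_one_eq_diagonal]

lemma charpoly_diagonal {N : Type*} [Fintype N] [DecidableEq N] (v : N → ℝ) :
    (Matrix.diagonal v).charpoly = ∏ i, (X - C (v i)) := by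
  rw [Matrix.charpoly]
  have : charmatrix (Matrix.diagonal v) = Matrix.diagonal (fun i => X - C (v i)) := by
    ext i j
    by_cases h : i = j
    · subst h; rw [charmatrix_apply_eq]; simp [Matrix.diagonal_apply]
    · rw [charmatrix_apply_ne _ _ _ h]; simp [Matrix.diagonal_apply, h]
  rw [this, Matrix.det_diagonal]

lemma roots_prod_X_sub_C' {N : Type*} [Fintype N] (v : N → ℝ) :
    (∏ i, (X - C (v i))).roots = Multiset.map v Finset.univ.val := by
  rw [Polynomial.roots_prod]
  · simp [Polynomial.roots_X_sub_C, Finset.val_toFinset]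
  · rw [Finset.prod_ne_zero_iff]
    intro i _
    exact X_sub_C_ne_zero _

lemma deg_eq (a b : ℕ) (p : Fin a × Fin b) :
    (tensorProd (⊤ : SimpleGraph (Fin a)) (⊤ : SimpleGraph (Fin b))).degree p = (a-1)*(b-1) := by
  have h : (tensorProd (⊤ : SimpleGraph (Fin a)) (⊤ : SimpleGraph (Fin b))).neighborFinset p
      = (({p.1}ᶜ : Finset (Fin a)) ×ˢ ({p.2}ᶜ : Finset (Fin b))) := by
    ext q
    rw [SimpleGraph.mem_neighborFinset]
    simp [tensorProd, SimpleGraph.mem_neighborFinset, Finset.mem_product, ne_comm]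
  rw [SimpleGraph.degree, h, Finset.card_product, Finset.card_compl, Finset.card_compl]
  simp [Fintype.card_fin]

lemma lap_eq (a b : ℕ) (ha : 1 ≤ a) (hb : 1 ≤ b) :
    (tensorProd (⊤ : SimpleGraph (Fin a)) (⊤ : SimpleGraph (Fin b))).lapMatrix ℝ
      = (((a:ℝ)-1)*((b:ℝ)-1)) • 1 - (Jm a - 1) ⊗ₖ (Jm b - 1) := by
  ext p q
  rw [SimpleGraph.lapMatrix]
  simp only [Matrix.sub_apply, SimpleGraph.degMatrix, Matrix.diagonal_apply,
    SimpleGraph.adjMatrix_apply, Matrix.smul_apply, Matrix.one_apply,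
    Matrix.kroneckerMap_apply, Jm, Matrix.of_apply, Matrix.sub_apply, Matrix.one_apply]
  rw [deg_eq a b]
  have hc : (((a-1)*(b-1) : ℕ) : ℝ) = ((a:ℝ)-1)*((b:ℝ)-1) := by
    push_cast [Nat.cast_sub ha, Nat.cast_sub hb]; ring
  by_cases h1 : p = q
  · subst h1
    simp [tensorProd, hc]
  · have : ¬ (p.1 = q.1 ∧ p.2 = q.2) := by
      intro ⟨u, v⟩; exact h1 (Prod.ext u v)
    simp only [if_neg h1, hc]
    by_cases h2 : p.1 = q.1
    · simp [tensorProd, h2, smul_eq_mul]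
    · by_cases h3 : p.2 = q.2
      · simp [tensorProd, h2, h3]
      · simp [tensorProd, h2, h3]

/-- The eigenvalue at index `p`. -/
def lamF (a b : ℕ) (z : Fin a) (w : Fin b) (p : Fin a × Fin b) : ℝ :=
  ((a:ℝ)-1)*((b:ℝ)-1) -
    (if p.1 = z then (a:ℝ) - 1 else -1) * (if p.2 = w then (b:ℝ) - 1 else -1)

lemma spec_eq (a b : ℕ) (ha : 1 ≤ a) (hb : 1 ≤ b) (z : Fin a) (w : Fin b) :
    spec ((tensorProd (⊤ : SimpleGraph (Fin a)) (⊤ : SimpleGraph (Fin b))).lapMatrix ℝ)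
      = Multiset.map (lamF a b z w) Finset.univ.val := by
  set c : ℝ := ((a:ℝ)-1)*((b:ℝ)-1) with hc
  set M := (tensorProd (⊤ : SimpleGraph (Fin a)) (⊤ : SimpleGraph (Fin b))).lapMatrix ℝ with hM
  set S := Pm z ⊗ₖ Pm w with hS
  set Λ := c • (1 : Matrix (Fin a × Fin b) (Fin a × Fin b) ℝ) - Dm a z ⊗ₖ Dm b w with hΛ
  have hL : M = c • 1 - (Jm a - 1) ⊗ₖ (Jm b - 1) := lap_eq a b ha hb
  have h1 : M * S = S * Λ := by
    calc M * S = c • S - ((Jm a - 1) * Pm z) ⊗ₖ ((Jm b - 1) * Pm w) := by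
          rw [hL, hS, sub_mul, smul_mul_assoc, one_mul, Matrix.mul_kronecker_mul]
      _ = c • S - (Pm z ⊗ₖ Pm w) * (Dm a z ⊗ₖ Dm b w) := by
          rw [key1, key1, ← Matrix.mul_kronecker_mul]
      _ = S * Λ := by
          rw [hΛ, hS, mul_sub, mul_smul_comm, mul_one]
  have hdetS : S.det ≠ 0 := by
    rw [hS, Matrix.det_kronecker]
    exact mul_ne_zero (pow_ne_zero _ (detPm_ne_zero ha z)) (pow_ne_zero _ (detPm_ne_zero hb w))
  have hdet : ∀ x : ℝ, (x • (1 : Matrix (Fin a × Fin b) (Fin a × Fin b) ℝ) - M).det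
      = (x • (1 : Matrix (Fin a × Fin b) (Fin a × Fin b) ℝ) - Λ).det := by
    intro x
    have hcomm : (x • (1 : Matrix (Fin a × Fin b) (Fin a × Fin b) ℝ) - M) * S
        = S * (x • (1 : Matrix (Fin a × Fin b) (Fin a × Fin b) ℝ) - Λ) := by
      calc (x • (1 : Matrix (Fin a × Fin b) (Fin a × Fin b) ℝ) - M) * S
          = x • S - M * S := by rw [sub_mul, smul_mul_assoc, one_mul]
        _ = x • S - S * Λ := by rw [h1]
        _ = S * (x • (1 : Matrix (Fin a × Fin b) (Fin a × Fin b) ℝ) - Λ) := by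
            conv_rhs => rw [mul_sub, mul_smul_comm, mul_one]
    have := congrArg Matrix.det hcomm
    rw [Matrix.det_mul, Matrix.det_mul, mul_comm S.det _] at this
    exact mul_right_cancel₀ hdetS this
  have hchar : M.charpoly = Λ.charpoly := by
    apply Polynomial.funext
    intro r
    rw [eval_charpoly', eval_charpoly', hdet]
  have hΛdiag : Λ = Matrix.diagonal (lamF a b z w) := by
    rw [hΛ, Dm_eq_diagonal, Dm_eq_diagonal, Matrix.diagonal_kronecker_diagonal,
      Matrix.smul_one_eq_diagonal, Matrix.diagonal_sub]
    rfl
  rw [spec, hchar, hΛdiag, charpoly_diagonal, roots_prod_X_sub_C']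

theorem part (a b : ℕ) (ha : 2 ≤ a) (hb : 2 ≤ b) :
    (∀ x : ℝ,
      x ∈ lapSpec (tensorProd (⊤ : SimpleGraph (Fin a)) (⊤ : SimpleGraph (Fin b))) ↔
        (x = 0 ∨ x = ((a:ℝ)-1)*((b:ℝ)-1) - 1 ∨
         x = ((a:ℝ)-1)*(b:ℝ) ∨ x = (a:ℝ)*((b:ℝ)-1))) ∧
    algConn (tensorProd (⊤ : SimpleGraph (Fin a)) (⊤ : SimpleGraph (Fin b))) =
      ((a:ℝ)-1)*((b:ℝ)-1) - 1 := by
  have ha' : (2:ℝ) ≤ (a:ℝ) := by exact_mod_cast ha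
  have hb' : (2:ℝ) ≤ (b:ℝ) := by exact_mod_cast hb
  set z : Fin a := ⟨0, by omega⟩ with hz
  set w : Fin b := ⟨0, by omega⟩ with hw
  set oz : Fin a := ⟨1, by omega⟩ with hoz
  set ow : Fin b := ⟨1, by omega⟩ with how
  have hozz : oz ≠ z := by simp [hz, hoz, Fin.ext_iff]
  have howw : ow ≠ w := by simp [hw, how, Fin.ext_iff]
  have hspec := spec_eq a b (by omega) (by omega) z w
  have hv00 : ∀ p : Fin a × Fin b, p.1 = z → p.2 = w → lamF a b z w p = 0 := by
    intro p h1 h2; rw [lamF, if_pos h1, if_pos h2]; ring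
  have hv01 : ∀ p : Fin a × Fin b, p.1 = z → p.2 ≠ w →
      lamF a b z w p = ((a:ℝ)-1)*(b:ℝ) := by
    intro p h1 h2; rw [lamF, if_pos h1, if_neg h2]; ring
  have hv10 : ∀ p : Fin a × Fin b, p.1 ≠ z → p.2 = w →
      lamF a b z w p = (a:ℝ)*((b:ℝ)-1) := by
    intro p h1 h2; rw [lamF, if_neg h1, if_pos h2]; ring
  have hv11 : ∀ p : Fin a × Fin b, p.1 ≠ z → p.2 ≠ w →
      lamF a b z w p = ((a:ℝ)-1)*((b:ℝ)-1) - 1 := by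
    intro p h1 h2; rw [lamF, if_neg h1, if_neg h2]; ring
  have key : lapSpec (tensorProd (⊤ : SimpleGraph (Fin a)) (⊤ : SimpleGraph (Fin b)))
      = Multiset.map (lamF a b z w) Finset.univ.val := by
    rw [lapSpec]
    convert hspec using 2
    congr!
  constructor
  · intro x
    rw [key, Multiset.mem_map]
    constructor
    · rintro ⟨p, -, rfl⟩
      by_cases h1 : p.1 = z <;> by_cases h2 : p.2 = w
      · left; exact hv00 p h1 h2
      · right; right; left; exact hv01 p h1 h2
      · right; right; right; exact hv10 p h1 h2
      · right; left; exact hv11 p h1 h2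
    · rintro (rfl | rfl | rfl | rfl)
      · exact ⟨(z, w), Finset.mem_univ_val _, hv00 (z, w) rfl rfl⟩
      · exact ⟨(oz, ow), Finset.mem_univ_val _, hv11 (oz, ow) hozz howw⟩
      · exact ⟨(z, ow), Finset.mem_univ_val _, hv01 (z, ow) rfl howw⟩
      · exact ⟨(oz, w), Finset.mem_univ_val _, hv10 (oz, w) hozz rfl⟩
  · have halg : algConn (tensorProd (⊤ : SimpleGraph (Fin a)) (⊤ : SimpleGraph (Fin b)))
        = ((lapSpec (tensorProd (⊤ : SimpleGraph (Fin a)) (⊤ : SimpleGraph (Fin b)))).sort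
            (· ≤ ·)).getD 1 0 := rfl
    rw [halg, key]
    have hmem1 : ((z, w) : Fin a × Fin b) ∈ (Finset.univ.val : Multiset (Fin a × Fin b)) :=
      Finset.mem_univ_val _
    set t1 := (Finset.univ.val : Multiset (Fin a × Fin b)).erase (z, w) with ht1
    have e1 : (Finset.univ.val : Multiset (Fin a × Fin b)) = (z, w) ::ₘ t1 :=
      (Multiset.cons_erase hmem1).symm
    have hne : ((oz, ow) : Fin a × Fin b) ≠ (z, w) := by
      simp [Prod.ext_iff]
      intro h; exact absurd h hozz
    have hmem2 : ((oz, ow) : Fin a × Fin b) ∈ t1 := by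
      rw [ht1, Multiset.mem_erase_of_ne hne]
      exact Finset.mem_univ_val _
    set t2 := t1.erase (oz, ow) with ht2
    have e2 : t1 = (oz, ow) ::ₘ t2 := (Multiset.cons_erase hmem2).symm
    have hv1 : lamF a b z w (z, w) = 0 := hv00 (z, w) rfl rfl
    have hv2 : lamF a b z w (oz, ow) = ((a:ℝ)-1)*((b:ℝ)-1) - 1 := hv11 (oz, ow) hozz howw
    have hbound : ∀ y ∈ Multiset.map (lamF a b z w) t2, ((a:ℝ)-1)*((b:ℝ)-1) - 1 ≤ y := by
      intro y hy
      obtain ⟨p, hp, rfl⟩ := Multiset.mem_map.mp hy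
      have hp1 : p ∈ t1 := Multiset.mem_of_mem_erase hp
      have hnodup : t1.Nodup := (Finset.univ.nodup).erase _
      have hpzw : p ≠ (z, w) := by
        rw [ht1] at hp1
        exact ((Finset.univ.nodup).mem_erase_iff.mp hp1).1
      by_cases h1 : p.1 = z <;> by_cases h2 : p.2 = w
      · exact absurd (Prod.ext h1 h2) hpzw
      · rw [hv01 p h1 h2]; nlinarith
      · rw [hv10 p h1 h2]; nlinarith
      · rw [hv11 p h1 h2]
    have h0 : ∀ y ∈ (((a:ℝ)-1)*((b:ℝ)-1) - 1) ::ₘ Multiset.map (lamF a b z w) t2,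
        (0:ℝ) ≤ y := by
      intro y hy
      have hc1 : (0:ℝ) ≤ ((a:ℝ)-1)*((b:ℝ)-1) - 1 := by nlinarith
      rcases Multiset.mem_cons.mp hy with rfl | hy'
      · exact hc1
      · exact le_trans hc1 (hbound y hy')
    rw [e1, e2, Multiset.map_cons, Multiset.map_cons, hv1, hv2,
      Multiset.sort_cons _ _ _ h0, Multiset.sort_cons _ _ _ hbound]
    rfl

end Spectrum

/-- the Laplacian eigenvalues of `K_{n-1} × K_m` and its algebraic connectivity. -/
theorem lapSpec_complete_tensor_complete (n m : ℕ) (hn : 3 ≤ n) (hm : 2 ≤ m) :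
    (∀ x : ℝ,
      x ∈ lapSpec (tensorProd (⊤ : SimpleGraph (Fin (n-1))) (⊤ : SimpleGraph (Fin m))) ↔
        (x = 0 ∨ x = ((m:ℝ)-1)*((n:ℝ)-2) - 1 ∨
         x = (n:ℝ) + ((m:ℝ)-1)*((n:ℝ)-2) - 2 ∨ x = ((n:ℝ)-1)*((m:ℝ)-1))) ∧
    algConn (tensorProd (⊤ : SimpleGraph (Fin (n-1))) (⊤ : SimpleGraph (Fin m))) =
      ((n:ℝ)-2)*((m:ℝ)-1) - 1 := by
  have hA : (((n-1:ℕ)):ℝ) = (n:ℝ) - 1 := by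
    rw [Nat.cast_sub (by omega)]; norm_num
  obtain ⟨h1, h2⟩ := part (n-1) m (by omega) hm
  rw [hA] at h1 h2
  constructor
  · intro x
    rw [h1 x]
    constructor
    · rintro (h | h | h | h)
      · left; exact h
      · right; left; exact h.trans (by ring)
      · right; right; left; exact h.trans (by ring)
      · right; right; right; exact h.trans (by ring)
    · rintro (h | h | h | h)
      · left; exact h
      · right; left; exact h.trans (by ring)
      · right; right; left; exact h.trans (by ring)
      · right; right; right; exact h.trans (by ring)
  · exact h2.trans (by ring)

end ArxivPaper
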